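/- Let ν be a probability density on ℝ with ∫|x|ν(x)dx < ∞, V(x) = 1+|x|, and P_α f(x) = ∫ f(y)ν(y − αx)dy. Fix α₀ ∈ (0,1) and a > 0 with J₀ := ∫_{-a}^a ν − ∫_{-2a}^{-a} ν − ∫_a^{2a} ν ≠ 0. For α ∈ (α₀,1) set x_α = a/(α−α₀) and f_α(y) = y·1_{[a+α₀x_α, a+αx_α]}(y) − y·1_{[−a+α₀x_α, −a+αx_α]}(y). Then lim_{α↓α₀} [(P_α f_α)(x_α) − (P_{α₀} f_α)(x_α)]/V(x_α) = α₀·J₀ ≠ 0; consequently ‖P_α − P_{α₀}‖_{B_V} does not tend to 0 as α ↓ α₀. -/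

import Mathlib

open MeasureTheory Filter Topology Set ENNReal


/-- The AR(1) transition operator `P_α f (x) = ∫ f(y) ν(y - αx) dy`. -/
noncomputable def arOp (ν : ℝ → ℝ) (α : ℝ) (f : ℝ → ℝ) (x : ℝ) : ℝ :=
  ∫ y, f y * ν (y - α * x)

/-- The operator "norm" `‖P_α - P_{α₀}‖_{B_V}` for `V(x) = 1 + |x|`, valued in `ℝ≥0∞`:
`sup_{|f| ≤ V} sup_x |P_α f(x) - P_{α₀} f(x)| / V(x)`. -/
noncomputable def arDiffNormV (ν : ℝ → ℝ) (α α₀ : ℝ) : ℝ≥0∞ :=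
  ⨆ f : {f : ℝ → ℝ // Measurable f ∧ ∀ y, |f y| ≤ 1 + |y|}, ⨆ x : ℝ,
    ENNReal.ofReal (|arOp ν α f.1 x - arOp ν α₀ f.1 x| / (1 + |x|))

lemma zmul_integrable (ν : ℝ → ℝ) (hpos : ∀ x, 0 ≤ ν x) (hint : Integrable ν)
    (hmom : Integrable (fun x => |x| * ν x)) : Integrable (fun z => z * ν z) := by
  refine hmom.mono' (aestronglyMeasurable_id.mul hint.1) ?_
  filter_upwards with z
  rw [Real.norm_eq_abs, abs_mul, abs_of_nonneg (hpos z)]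

lemma piece_integrable (ν : ℝ → ℝ) (hpos : ∀ x, 0 ≤ ν x) (hint : Integrable ν)
    (hmom : Integrable (fun x => |x| * ν x)) (c p q : ℝ) :
    Integrable (fun y => (y * (Set.Icc p q).indicator (fun _ => (1:ℝ)) y) * ν (y - c)) := by
  have h1 : Integrable (fun y => y * ν (y - c)) := by
    have h2 := ((zmul_integrable ν hpos hint hmom).comp_sub_right c).add
      ((hint.comp_sub_right c).const_mul c)
    refine h2.congr ?_
    filter_upwards with y
    show (y - c) * ν (y - c) + c * ν (y - c) = y * ν (y - c)
    ring
  have key : (fun y => (y * (Set.Icc p q).indicator (fun _ => (1:ℝ)) y) * ν (y - c))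
      = (Set.Icc p q).indicator (fun y => y * ν (y - c)) := by
    funext y
    by_cases h : y ∈ Set.Icc p q
    · simp [Set.indicator_of_mem, h]
    · simp [Set.indicator_of_notMem, h]
  rw [key]
  exact h1.indicator measurableSet_Icc

lemma helper1 (ν : ℝ → ℝ) (hpos : ∀ x, 0 ≤ ν x) (hint : Integrable ν)
    (hmom : Integrable (fun x => |x| * ν x)) (c p q : ℝ) :
    (∫ y, (y * (Set.Icc p q).indicator (fun _ => (1:ℝ)) y) * ν (y - c)) =
      (∫ z in Set.Icc (p - c) (q - c), z * ν z) + c * ∫ z in Set.Icc (p - c) (q - c), ν z := by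
  have hzν : Integrable (fun z => z * ν z) := zmul_integrable ν hpos hint hmom
  rw [← integral_add_right_eq_self (fun y => (y * (Set.Icc p q).indicator (fun _ => (1:ℝ)) y) * ν (y - c)) c]
  have key : (fun z => ((z + c) * (Set.Icc p q).indicator (fun _ => (1:ℝ)) (z + c)) * ν (z + c - c))
      = (Set.Icc (p - c) (q - c)).indicator (fun z => z * ν z + c * ν z) := by
    funext z
    by_cases h : z ∈ Set.Icc (p - c) (q - c)
    · have h' : z + c ∈ Set.Icc p q := by
        rw [Set.mem_Icc] at h ⊢; constructor <;> linarith [h.1, h.2]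
      rw [Set.indicator_of_mem h, Set.indicator_of_mem h']
      have : z + c - c = z := by ring
      rw [this]; ring
    · have h' : z + c ∉ Set.Icc p q := by
        rw [Set.mem_Icc] at h ⊢
        intro hc; exact h ⟨by linarith [hc.1], by linarith [hc.2]⟩
      rw [Set.indicator_of_notMem h, Set.indicator_of_notMem h']
      ring
  show (∫ z, ((z + c) * (Set.Icc p q).indicator (fun _ => (1:ℝ)) (z + c)) * ν (z + c - c)) = _
  rw [key, integral_indicator measurableSet_Icc,
    integral_add hzν.integrableOn ((hint.const_mul c).integrableOn),
    MeasureTheory.integral_const_mul]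

theorem stmt10 (ν : ℝ → ℝ) (hpos : ∀ x, 0 ≤ ν x) (hint : Integrable ν)
    (hmass : ∫ x, ν x = 1) (hmom : Integrable (fun x => |x| * ν x))
    (α₀ : ℝ) (hα₀ : α₀ ∈ Set.Ioo (0 : ℝ) 1) (a : ℝ) (ha : 0 < a)
    (J₀ : ℝ)
    (hJ₀ : J₀ = (∫ y in (-a)..a, ν y) - (∫ y in (-2*a)..(-a), ν y) - ∫ y in a..(2*a), ν y)
    (hJ₀ne : J₀ ≠ 0)
    (xα : ℝ → ℝ) (hxα : ∀ α, xα α = a / (α - α₀))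
    (fα : ℝ → ℝ → ℝ)
    (hfα : ∀ α y, fα α y =
      y * (Icc (a + α₀ * xα α) (a + α * xα α)).indicator (fun _ => (1:ℝ)) y -
      y * (Icc (-a + α₀ * xα α) (-a + α * xα α)).indicator (fun _ => (1:ℝ)) y) :
    Tendsto (fun α => (arOp ν α (fα α) (xα α) - arOp ν α₀ (fα α) (xα α)) / (1 + |xα α|))
        (𝓝[>] α₀) (𝓝 (α₀ * J₀)) ∧
      α₀ * J₀ ≠ 0 ∧
      ¬ Tendsto (fun α => arDiffNormV ν α α₀) (𝓝[>] α₀) (𝓝 0) := by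
  set M1 := ∫ z in Set.Icc (0:ℝ) a, ν z with hM1
  set M2 := ∫ z in Set.Icc (-2*a) (-a), ν z with hM2
  set M3 := ∫ z in Set.Icc a (2*a), ν z with hM3
  set M4 := ∫ z in Set.Icc (-a) (0:ℝ), ν z with hM4
  set A1 := ∫ z in Set.Icc (0:ℝ) a, z * ν z with hA1
  set A2 := ∫ z in Set.Icc (-2*a) (-a), z * ν z with hA2
  set A3 := ∫ z in Set.Icc a (2*a), z * ν z with hA3
  set A4 := ∫ z in Set.Icc (-a) (0:ℝ), z * ν z with hA4
  set C := A1 - A2 - A3 + A4 with hC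
  -- key algebraic identity
  have key : ∀ α, α₀ < α → α * xα α - α₀ * xα α = a := by
    intro α hα
    have hne : α - α₀ ≠ 0 := sub_ne_zero.mpr (ne_of_gt hα)
    rw [hxα]
    field_simp
  have hxpos : ∀ α, α₀ < α → 0 < xα α := by
    intro α hα
    rw [hxα]
    exact div_pos ha (by linarith)
  -- relation between M's and J₀
  have cI : ∀ p q : ℝ, p ≤ q → (∫ z in Set.Icc p q, ν z) = ∫ y in p..q, ν y := by
    intro p q h
    rw [intervalIntegral.integral_of_le h, integral_Icc_eq_integral_Ioc]
  have hadd : (∫ y in (-a)..(0:ℝ), ν y) + ∫ y in (0:ℝ)..a, ν y = ∫ y in (-a)..a, ν y :=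
    intervalIntegral.integral_add_adjacent_intervals hint.intervalIntegrable
      hint.intervalIntegrable
  have hJ' : M1 - M2 - M3 + M4 = J₀ := by
    rw [hM1, hM2, hM3, hM4, cI 0 a ha.le, cI (-2*a) (-a) (by linarith),
      cI a (2*a) (by linarith), cI (-a) 0 (by linarith), hJ₀, ← hadd]
    ring
  -- the main computation
  have hD : ∀ α, α₀ < α →
      arOp ν α (fα α) (xα α) - arOp ν α₀ (fα α) (xα α) =
        C + (α * (M1 - M2) - α₀ * M3 + α₀ * M4) * xα α := by
    intro α hα
    have hk := key α hα
    have e : ∀ c : ℝ, (∫ y, fα α y * ν (y - c)) =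
        (((∫ z in Set.Icc (a + α₀ * xα α - c) (a + α * xα α - c), z * ν z)
          + c * ∫ z in Set.Icc (a + α₀ * xα α - c) (a + α * xα α - c), ν z))
        - (((∫ z in Set.Icc (-a + α₀ * xα α - c) (-a + α * xα α - c), z * ν z)
          + c * ∫ z in Set.Icc (-a + α₀ * xα α - c) (-a + α * xα α - c), ν z)) := by
      intro c
      have hre : (fun y => fα α y * ν (y - c)) = fun y =>
          (y * (Set.Icc (a + α₀ * xα α) (a + α * xα α)).indicator (fun _ => (1:ℝ)) y) * ν (y - c)
          - (y * (Set.Icc (-a + α₀ * xα α) (-a + α * xα α)).indicator (fun _ => (1:ℝ)) y) * ν (y - c) := by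
        funext y
        rw [hfα]
        ring
      rw [hre, integral_sub (piece_integrable ν hpos hint hmom _ _ _)
        (piece_integrable ν hpos hint hmom _ _ _),
        helper1 ν hpos hint hmom, helper1 ν hpos hint hmom]
    have E1 := e (α * xα α)
    have E2 := e (α₀ * xα α)
    have p1 : a + α₀ * xα α - α * xα α = 0 := by linarith
    have p2 : a + α * xα α - α * xα α = a := by ring
    have p3 : -a + α₀ * xα α - α * xα α = -2*a := by linarith
    have p4 : -a + α * xα α - α * xα α = -a := by ring
    have q1 : a + α₀ * xα α - α₀ * xα α = a := by ring
    have q2 : a + α * xα α - α₀ * xα α = 2*a := by linarith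
    have q3 : -a + α₀ * xα α - α₀ * xα α = -a := by ring
    have q4 : -a + α * xα α - α₀ * xα α = 0 := by linarith
    rw [p1, p2, p3, p4] at E1
    rw [q1, q2, q3, q4] at E2
    show (∫ y, fα α y * ν (y - α * xα α)) - (∫ y, fα α y * ν (y - α₀ * xα α)) = _
    rw [E1, E2, hC, hA1, hA2, hA3, hA4, hM1, hM2, hM3, hM4]
    ring
  -- limit of xα
  have hxt : Tendsto xα (𝓝[>] α₀) atTop := by
    have h1 : Tendsto (fun α => α - α₀) (𝓝[>] α₀) (𝓝[>] (0:ℝ)) := by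
      apply tendsto_nhdsWithin_of_tendsto_nhds_of_eventually_within
      · have hsub : Tendsto (fun α : ℝ => α - α₀) (𝓝 α₀) (𝓝 0) := by
          have := (continuous_sub_right α₀).tendsto α₀
          simpa using this
        exact hsub.mono_left nhdsWithin_le_nhds
      · filter_upwards [self_mem_nhdsWithin] with α hα
        exact sub_pos.mpr (show α₀ < α from hα)
    have h2 := tendsto_inv_nhdsGT_zero.comp h1
    have h3 := Tendsto.const_mul_atTop ha h2
    refine h3.congr fun α => ?_
    rw [hxα, div_eq_mul_inv]
    rfl
  have hden : Tendsto (fun α => 1 + xα α) (𝓝[>] α₀) atTop :=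
    tendsto_atTop_add_const_left _ 1 hxt
  have hinv : Tendsto (fun α => (1 + xα α)⁻¹) (𝓝[>] α₀) (𝓝 0) :=
    tendsto_inv_atTop_zero.comp hden
  have hfrac : Tendsto (fun α => xα α / (1 + xα α)) (𝓝[>] α₀) (𝓝 1) := by
    have base : Tendsto (fun α => 1 - (1 + xα α)⁻¹) (𝓝[>] α₀) (𝓝 1) := by
      have := (tendsto_const_nhds : Tendsto (fun _ : ℝ => (1:ℝ)) (𝓝[>] α₀) (𝓝 1)).sub hinv
      simpa using this
    refine base.congr' ?_
    filter_upwards [self_mem_nhdsWithin] with α hα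
    have hx0 : 0 < xα α := hxpos α hα
    have hne : (1:ℝ) + xα α ≠ 0 := by positivity
    field_simp
    ring
  have hK : Tendsto (fun α => α * (M1 - M2) - α₀ * M3 + α₀ * M4) (𝓝[>] α₀)
      (𝓝 (α₀ * (M1 - M2) - α₀ * M3 + α₀ * M4)) := by
    have hc : Continuous (fun α : ℝ => α * (M1 - M2) - α₀ * M3 + α₀ * M4) :=
      ((continuous_id.mul continuous_const).sub continuous_const).add continuous_const
    exact (hc.tendsto α₀).mono_left nhdsWithin_le_nhds
  have hcomb := (hinv.const_mul C).add (hK.mul hfrac)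
  have hval : C * 0 + (α₀ * (M1 - M2) - α₀ * M3 + α₀ * M4) * 1 = α₀ * J₀ := by
    rw [← hJ']
    ring
  rw [hval] at hcomb
  have heq : ∀ᶠ α in 𝓝[>] α₀,
      C * (1 + xα α)⁻¹ + (α * (M1 - M2) - α₀ * M3 + α₀ * M4) * (xα α / (1 + xα α)) =
      (arOp ν α (fα α) (xα α) - arOp ν α₀ (fα α) (xα α)) / (1 + |xα α|) := by
    filter_upwards [self_mem_nhdsWithin] with α hα
    have hx0 : 0 < xα α := hxpos α hα
    rw [hD α hα, abs_of_pos hx0]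
    have hne : (1:ℝ) + xα α ≠ 0 := by positivity
    field_simp
    try ring
  have part1 : Tendsto (fun α => (arOp ν α (fα α) (xα α) - arOp ν α₀ (fα α) (xα α)) / (1 + |xα α|))
      (𝓝[>] α₀) (𝓝 (α₀ * J₀)) := hcomb.congr' heq
  have hne0 : α₀ * J₀ ≠ 0 := mul_ne_zero (ne_of_gt hα₀.1) hJ₀ne
  refine ⟨part1, hne0, ?_⟩
  intro hten
  have habs : 0 < |α₀ * J₀| := abs_pos.mpr hne0
  have hev1 : ∀ᶠ α in 𝓝[>] α₀,
      |α₀ * J₀| / 2 < |(arOp ν α (fα α) (xα α) - arOp ν α₀ (fα α) (xα α)) / (1 + |xα α|)| :=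
    Tendsto.eventually_const_lt (half_lt_self habs) part1.abs
  have hev2 : ∀ᶠ α in 𝓝[>] α₀, arDiffNormV ν α α₀ < ENNReal.ofReal (|α₀ * J₀| / 2) :=
    Tendsto.eventually_lt_const (ENNReal.ofReal_pos.mpr (by linarith)) hten
  obtain ⟨α, h1, h2, hαmem⟩ := (hev1.and (hev2.and self_mem_nhdsWithin)).exists
  have hα : α₀ < α := hαmem
  have hx0 : 0 < xα α := hxpos α hα
  have hmeasf : Measurable (fα α) := by
    have hfe : fα α = fun y =>
        y * (Set.Icc (a + α₀ * xα α) (a + α * xα α)).indicator (fun _ => (1:ℝ)) y -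
        y * (Set.Icc (-a + α₀ * xα α) (-a + α * xα α)).indicator (fun _ => (1:ℝ)) y :=
      funext (hfα α)
    rw [hfe]
    exact (measurable_id.mul (measurable_const.indicator measurableSet_Icc)).sub
      (measurable_id.mul (measurable_const.indicator measurableSet_Icc))
  have hbnd : ∀ y, |fα α y| ≤ 1 + |y| := by
    intro y
    have hk := key α hα
    rw [hfα]
    by_cases h1' : y ∈ Set.Icc (a + α₀ * xα α) (a + α * xα α) <;>
      by_cases h2' : y ∈ Set.Icc (-a + α₀ * xα α) (-a + α * xα α)
    · exfalso
      rw [Set.mem_Icc] at h1' h2'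
      linarith [h1'.1, h2'.2]
    · rw [Set.indicator_of_mem h1', Set.indicator_of_notMem h2']
      simp only [mul_one, mul_zero, sub_zero]
      linarith [abs_nonneg y]
    · rw [Set.indicator_of_notMem h1', Set.indicator_of_mem h2']
      simp only [mul_one, mul_zero, zero_sub, abs_neg]
      linarith [abs_nonneg y]
    · rw [Set.indicator_of_notMem h1', Set.indicator_of_notMem h2']
      simp only [mul_zero, sub_zero, abs_zero]
      positivity
  have hle : ENNReal.ofReal
      (|arOp ν α (fα α) (xα α) - arOp ν α₀ (fα α) (xα α)| / (1 + |xα α|)) ≤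
        arDiffNormV ν α α₀ := by
    apply le_iSup_of_le (⟨fα α, hmeasf, hbnd⟩ : {f : ℝ → ℝ // Measurable f ∧ ∀ y, |f y| ≤ 1 + |y|})
    exact le_iSup (fun x => ENNReal.ofReal
      (|arOp ν α (fα α) x - arOp ν α₀ (fα α) x| / (1 + |x|))) (xα α)
  have hdpos : (0:ℝ) < 1 + |xα α| := by positivity
  have habseq : |(arOp ν α (fα α) (xα α) - arOp ν α₀ (fα α) (xα α)) / (1 + |xα α|)|
      = |arOp ν α (fα α) (xα α) - arOp ν α₀ (fα α) (xα α)| / (1 + |xα α|) := by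
    rw [abs_div, abs_of_pos hdpos]
  rw [habseq] at h1
  have hlt : ENNReal.ofReal (|α₀ * J₀| / 2) < ENNReal.ofReal
      (|arOp ν α (fα α) (xα α) - arOp ν α₀ (fα α) (xα α)| / (1 + |xα α|)) :=
    (ENNReal.ofReal_lt_ofReal_iff (by linarith)).mpr h1
  exact lt_irrefl _ (lt_trans (lt_of_lt_of_le hlt hle) h2)
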